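/- Define, for a strictly increasing finite sequence a_1 < ... < a_n of natural numbers ≥ 2, EXP(a_1) = {a_1} and EXP(a_1,...,a_i) = { a_i^(e_{i-1}·...·e_1) : e_t ∈ EXP(a_1,...,a_t) ∪ {1} for t = 1,...,i−1 }, and let m_i = max EXP(a_1,...,a_i). Let f_n be the tower function of height n−1: f_2(k)=k, f_{n+1}(k)=k^{f_n(k)}. Then for every i with 2 ≤ i ≤ n, f_i(a_{i-1}) ≥ m_{i-1} · m_{i-2} · ... · m_1. -/

import Mathlib

/-- The sets of exponentiations: `EXP a 1 = {a 1}` and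
`EXP a i = { a i ^ (e_{i-1} ⋯ e_1) | e_t ∈ EXP a t ∪ {1} for 1 ≤ t < i }`. -/
def EXP (a : ℕ → ℕ) (i : ℕ) : Set ℕ :=
  { x | ∃ e : ℕ → ℕ, (∀ t, 0 < t → t < i → e t ∈ EXP a t ∪ {1}) ∧
      x = a i ^ ∏ t ∈ Finset.Ico 1 i, e t }
termination_by i

lemma EXP_mem_iff (a : ℕ → ℕ) (i : ℕ) (x : ℕ) :
    x ∈ EXP a i ↔ ∃ e : ℕ → ℕ, (∀ t, 0 < t → t < i → e t ∈ EXP a t ∪ {1}) ∧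
      x = a i ^ ∏ t ∈ Finset.Ico 1 i, e t := by
  rw [EXP]; rfl

lemma f_ge (f : ℕ → ℕ → ℕ) (hf2 : ∀ k, f 2 k = k)
    (hfsucc : ∀ j, 2 ≤ j → ∀ k, f (j + 1) k = k ^ f j k) :
    ∀ j, 2 ≤ j → ∀ k, 1 ≤ k → k ≤ f j k := by
  intro j hj
  induction j, hj using Nat.le_induction with
  | base => intro k hk; rw [hf2]
  | succ j hj ih =>
    intro k hk
    rw [hfsucc j hj]
    calc k = k ^ 1 := (pow_one k).symm
    _ ≤ k ^ f j k := Nat.pow_le_pow_right hk (le_trans hk (ih k hk))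

lemma f_mono (f : ℕ → ℕ → ℕ) (hf2 : ∀ k, f 2 k = k)
    (hfsucc : ∀ j, 2 ≤ j → ∀ k, f (j + 1) k = k ^ f j k) :
    ∀ j, 2 ≤ j → ∀ k l, 2 ≤ k → k < l → f j k < f j l := by
  intro j hj
  induction j, hj using Nat.le_induction with
  | base => intro k l hk hkl; rw [hf2, hf2]; exact hkl
  | succ j hj ih =>
    intro k l hk hkl
    rw [hfsucc j hj, hfsucc j hj]
    calc k ^ f j k ≤ l ^ f j k := Nat.pow_le_pow_left hkl.le _
    _ < l ^ f j l := Nat.pow_lt_pow_right (by omega) (ih k l hk hkl)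

lemma f_twice (f : ℕ → ℕ → ℕ) (hf2 : ∀ k, f 2 k = k)
    (hfsucc : ∀ j, 2 ≤ j → ∀ k, f (j + 1) k = k ^ f j k) :
    ∀ j, 3 ≤ j → ∀ k l, 2 ≤ k → k < l → 2 * f j k ≤ f j l := by
  intro j hj k l hk hkl
  obtain ⟨j, rfl⟩ : ∃ j', j = j' + 1 := ⟨j - 1, by omega⟩
  have hj2 : 2 ≤ j := by omega
  rw [hfsucc j hj2, hfsucc j hj2]
  have h1 : f j k + 1 ≤ f j l := f_mono f hf2 hfsucc j hj2 k l hk hkl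
  calc 2 * k ^ f j k ≤ k * k ^ f j k := Nat.mul_le_mul_right _ hk
  _ = k ^ (f j k + 1) := by ring
  _ ≤ l ^ (f j k + 1) := Nat.pow_le_pow_left hkl.le _
  _ ≤ l ^ f j l := Nat.pow_le_pow_right (by omega) h1

/-- If `f_n` is the tower function of height `n-1` (`f_2(k) = k`,
`f_{n+1}(k) = k ^ f_n(k)`), `a_1 < ... < a_n` are naturals `≥ 2`, and
`m_i = max EXP(a_1, ..., a_i)`, then `f_i(a_{i-1}) ≥ m_{i-1} ⋯ m_1`
for `2 ≤ i ≤ n`. -/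
theorem tower_ge_prod_max (f : ℕ → ℕ → ℕ)
    (hf2 : ∀ k, f 2 k = k)
    (hfsucc : ∀ j, 2 ≤ j → ∀ k, f (j + 1) k = k ^ f j k)
    (a : ℕ → ℕ) (n : ℕ)
    (ha2 : ∀ t, 1 ≤ t → t ≤ n → 2 ≤ a t)
    (hmono : StrictMonoOn a (Set.Icc 1 n))
    (m : ℕ → ℕ)
    (hm : ∀ i, 1 ≤ i → i ≤ n → IsGreatest (EXP a i) (m i)) :
    ∀ i, 2 ≤ i → i ≤ n → (∏ t ∈ Finset.Ico 1 i, m t) ≤ f i (a (i - 1)) := by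
  have hmpos : ∀ t, 1 ≤ t → t ≤ n → 1 ≤ m t := by
    intro t h1 h2
    obtain ⟨e, he, heq⟩ := (EXP_mem_iff a t (m t)).1 (hm t h1 h2).1
    rw [heq]
    exact Nat.one_le_pow _ _ (by have := ha2 t h1 h2; omega)
  have hmval : ∀ i, 1 ≤ i → i ≤ n → m i = a i ^ ∏ t ∈ Finset.Ico 1 i, m t := by
    intro i h1 h2
    apply le_antisymm
    · obtain ⟨e, he, heq⟩ := (EXP_mem_iff a i (m i)).1 (hm i h1 h2).1
      rw [heq]
      apply Nat.pow_le_pow_right (by have := ha2 i h1 h2; omega)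
      apply Finset.prod_le_prod'
      intro t ht
      rw [Finset.mem_Ico] at ht
      rcases he t ht.1 ht.2 with h | h
      · exact (hm t ht.1 (by omega)).2 h
      · simp only [Set.mem_singleton_iff] at h
        rw [h]; exact hmpos t ht.1 (by omega)
    · exact (hm i h1 h2).2 ((EXP_mem_iff a i _).2
        ⟨m, fun t ht hti => Or.inl (hm t ht (by omega)).1, rfl⟩)
  intro i hi
  induction i, hi using Nat.le_induction with
  | base =>
    intro h2n
    have h1 : m 1 = a 1 := by simpa using hmval 1 le_rfl (by omega)
    have : (∏ t ∈ Finset.Ico 1 2, m t) = m 1 := by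
      rw [Finset.prod_Ico_succ_top le_rfl]; simp
    rw [this, hf2, h1]
  | succ i hi ih =>
    intro hin
    have hIle : i ≤ n := by omega
    have ihP := ih hIle
    rw [Finset.prod_Ico_succ_top (by omega : 1 ≤ i), hmval i (by omega) hIle,
      hfsucc i hi]
    simp only [Nat.add_sub_cancel]
    set P := ∏ t ∈ Finset.Ico 1 i, m t with hP
    have hai2 : 2 ≤ a i := ha2 i (by omega) hIle
    have haim : a (i - 1) < a i :=
      hmono ⟨by omega, by omega⟩ ⟨by omega, hIle⟩ (by omega)
    have hai12 : 2 ≤ a (i - 1) := ha2 (i - 1) (by omega) (by omega)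
    rcases eq_or_lt_of_le hi with h2 | h3
    · -- i = 2
      have h2' : i = 2 := h2.symm
      subst h2'
      rw [hf2] at ihP ⊢
      have hPa : P + 1 ≤ a 2 := by
        have : a 1 < a 2 := haim
        omega
      calc P * a 2 ^ P ≤ a 2 * a 2 ^ P := Nat.mul_le_mul_right _ (by omega)
      _ = a 2 ^ (P + 1) := by ring
      _ ≤ a 2 ^ a 2 := Nat.pow_le_pow_right (by omega) hPa
    · -- 3 ≤ i
      have htw : 2 * f i (a (i - 1)) ≤ f i (a i) :=
        f_twice f hf2 hfsucc i (by omega) _ _ hai12 haim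
      calc P * a i ^ P ≤ a i ^ P * a i ^ P :=
            Nat.mul_le_mul_right _
              (le_trans (Nat.lt_two_pow_self (n := P)).le (Nat.pow_le_pow_left hai2 P))
      _ = a i ^ (2 * P) := by rw [two_mul, pow_add]
      _ ≤ a i ^ (2 * f i (a (i - 1))) :=
            Nat.pow_le_pow_right (by omega) (Nat.mul_le_mul_left 2 ihP)
      _ ≤ a i ^ f i (a i) := Nat.pow_le_pow_right (by omega) htw
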